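/- Let G be a connected weighted multigraph with polarization q of genus g ≥ 1. Then there exists a homogeneous polynomial P in m variables of degree 2b_1 + 1 = 2(m−n+1)+1 with rational coefficients such that for all positive edge lengths ℓ_1,…,ℓ_m one has ε(G)·η_G(ℓ_1,…,ℓ_m)² = P(ℓ_1,…,ℓ_m). -/

import Mathlib

open scoped Classical
open Matrix Filter Topology

/-- A weighted multigraph with vertex type `V` and edge index type `E`:
each edge is assigned an (ordered representative of an unordered) pair of endpoints. -/
structure WMG (V E : Type) where
  ends : E → V × V

namespace WMG

variable {V E : Type} [Fintype V] [DecidableEq V] [Fintype E] [DecidableEq E]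

/-- `a` and `b` are joined by some edge belonging to `S`. -/
def Step (G : WMG V E) (S : Set E) (a b : V) : Prop :=
  ∃ k ∈ S, G.ends k = (a, b) ∨ G.ends k = (b, a)

/-- Any two vertices can be joined by a walk using only edges from `S`. -/
def ConnectedVia (G : WMG V E) (S : Set E) : Prop :=
  ∀ a b : V, Relation.ReflTransGen (G.Step S) a b

/-- `G` is connected. -/
def Connected (G : WMG V E) : Prop := G.ConnectedVia Set.univ

/-- A set `T` of edges is a spanning tree: it has `#V - 1` edges and connects all vertices. -/
def IsSpanningTree (G : WMG V E) (T : Finset E) : Prop :=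
  T.card + 1 = Fintype.card V ∧ G.ConnectedVia ↑T

/-- `η_G(ℓ) = Σ_{T spanning tree} Π_{k ∉ T} ℓ_k`. -/
noncomputable def eta (G : WMG V E) (ℓ : E → ℝ) : ℝ :=
  ∑ T : Finset E, if G.IsSpanningTree T then ∏ k ∈ Tᶜ, ℓ k else 0

/-- The weighted Laplacian matrix of `G`. -/
noncomputable def lap (G : WMG V E) (ℓ : E → ℝ) : Matrix V V ℝ :=
  Matrix.of fun a b =>
    if a = b then
      ∑ k : E, if ((G.ends k).1 = a ∨ (G.ends k).2 = a) ∧ (G.ends k).1 ≠ (G.ends k).2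
        then (ℓ k)⁻¹ else 0
    else
      - ∑ k : E, if G.ends k = (a, b) ∨ G.ends k = (b, a) then (ℓ k)⁻¹ else 0

/-- The standard basis vector (point mass) at a vertex. -/
def delta (a : V) : V → ℝ := fun x => if x = a then 1 else 0

/-- Effective resistance `r(a,b)`: the entry at `a` of the unique solution `h` of
`Q^{(b)} h = u_a` (the Laplacian with row and column `b` deleted).  Equivalently, writing
`h̃` for the extension of `h` by `h̃ b = 0`, it is the entry at `a` of the unique `v` with
`Q v = δ_a - δ_b` and `v b = 0` (the two systems have the same solutions since all row and
column sums of `Q` vanish).  We set `r(a,a) = 0`; this is automatic in the connected case. -/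
noncomputable def res (G : WMG V E) (ℓ : E → ℝ) (a b : V) : ℝ :=
  if h : ∃! v : V → ℝ, G.lap ℓ *ᵥ v = delta a - delta b ∧ v b = 0
  then h.exists.choose a else 0

/-- The valence of a vertex (loop edges counted twice). -/
def valence (G : WMG V E) (a : V) : ℕ :=
  ∑ k : E, ((if (G.ends k).1 = a then 1 else 0) + (if (G.ends k).2 = a then 1 else 0))

/-- The genus of the polarized graph `(G, q)`: `g = #E - #V + 1 + Σ_a q(a)`. -/
def genus (G : WMG V E) (q : V → ℕ) : ℤ :=
  (Fintype.card E : ℤ) - (Fintype.card V : ℤ) + 1 + ∑ a, (q a : ℤ)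

/-- The canonical divisor `K(a) = 2 q(a) + v(a) - 2`, as a real number. -/
noncomputable def Kdiv (G : WMG V E) (q : V → ℕ) (a : V) : ℝ :=
  2 * (q a : ℝ) + (G.valence a : ℝ) - 2

/-- `F(e_k) = 1 - r(e_k)/ℓ_k` where `r(e_k)` is the resistance between the endpoints. -/
noncomputable def Fres (G : WMG V E) (ℓ : E → ℝ) (k : E) : ℝ :=
  1 - G.res ℓ (G.ends k).1 (G.ends k).2 / ℓ k

/-- Zhang's invariant `ε` of the polarized metric graph, via the paper's explicit formula. -/
noncomputable def epsilon (G : WMG V E) (q : V → ℕ) (ℓ : E → ℝ) : ℝ :=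
  (1 / (G.genus q : ℝ)) * ∑ a, ∑ b, (q a : ℝ) * G.Kdiv q b * G.res ℓ a b
  + (((G.genus q : ℝ) - 1) / (3 * (G.genus q : ℝ))) * ∑ k, (G.Fres ℓ k) ^ 2 * ℓ k
  + (1 / (2 * (G.genus q : ℝ))) * ∑ a, G.Kdiv q a *
      ∑ k, G.Fres ℓ k * (G.res ℓ a (G.ends k).1 + G.res ℓ a (G.ends k).2)

/-- `r(K, K) = Σ_{a,b} K(a) K(b) r(a,b)`. -/
noncomputable def rKK (G : WMG V E) (q : V → ℕ) (ℓ : E → ℝ) : ℝ :=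
  ∑ a, ∑ b, G.Kdiv q a * G.Kdiv q b * G.res ℓ a b

/-- Zhang's invariant `φ` of the polarized metric graph, via the paper's explicit formula
`φ = ((5g-2)/(4(g-1))) ε - (3/(8(g-1))) r(K,K) - ℓ(G)/4`. -/
noncomputable def phi (G : WMG V E) (q : V → ℕ) (ℓ : E → ℝ) : ℝ :=
  ((5 * (G.genus q : ℝ) - 2) / (4 * ((G.genus q : ℝ) - 1))) * G.epsilon q ℓ
  - (3 / (8 * ((G.genus q : ℝ) - 1))) * G.rKK q ℓ
  - (∑ k, ℓ k) / 4

/-- The map on vertices identifying `b` with `a` (realized on the subtype omitting `b`). -/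
def fuseV (a b : V) (hab : a ≠ b) (x : V) : {y : V // y ≠ b} :=
  if h : x = b then ⟨a, hab⟩ else ⟨x, h⟩

/-- The fusion `G'` of two distinct vertices `a, b` of `G`: identify `a` and `b`,
keeping all edges and lengths. -/
def fuse (G : WMG V E) (a b : V) (hab : a ≠ b) : WMG {y : V // y ≠ b} E :=
  ⟨fun k => (fuseV a b hab (G.ends k).1, fuseV a b hab (G.ends k).2)⟩

/-- The contraction `G/e` of a non-loop edge: identify the two endpoints of `e`,
delete `e`, and keep all other edges. -/
def contract (G : WMG V E) (k0 : E) (hk : (G.ends k0).1 ≠ (G.ends k0).2) :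
    WMG {y : V // y ≠ (G.ends k0).2} {k : E // k ≠ k0} :=
  ⟨fun k => (fuseV (G.ends k0).1 (G.ends k0).2 hk (G.ends k.1).1,
             fuseV (G.ends k0).1 (G.ends k0).2 hk (G.ends k.1).2)⟩

end WMG


section CauchyBinet

open Finset Matrix Equiv Equiv.Perm

private theorem cb_aux {R : Type*} [CommRing R] {p q : ℕ}
    (A : Matrix (Fin p) (Fin q) R) (B : Matrix (Fin q) (Fin p) R) {f : Fin p → Fin q}
    (H : ¬Function.Injective f) :
    (∑ σ : Perm (Fin p), ((Perm.sign σ : ℤ) : R) * ∏ x, A (σ x) (f x) * B (f x) x) = 0 := by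
  obtain ⟨i, j, hfij, hij⟩ : ∃ i j, f i = f j ∧ i ≠ j := by
    rw [Function.Injective] at H; push_neg at H
    obtain ⟨i, j, h1, h2⟩ := H; exact ⟨i, j, h1, h2⟩
  refine sum_involution (fun σ _ => σ * Equiv.swap i j)
    (fun σ _ => ?_)
    (fun σ _ _ => (not_congr mul_swap_eq_iff).mpr hij)
    (fun _ _ => mem_univ _) (fun σ _ => mul_swap_involutive i j σ)
  have h1 : (∏ x, A (σ x) (f x)) = ∏ x, A ((σ * Equiv.swap i j) x) (f x) :=
    Fintype.prod_equiv (Equiv.swap i j) _ _ (by simp [apply_swap_eq_self hfij])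
  have hs : ((Perm.sign (σ * Equiv.swap i j) : ℤ) : R) = -((Perm.sign σ : ℤ) : R) := by
    simp [sign_swap hij]
  rw [prod_mul_distrib, prod_mul_distrib, hs, ← h1]
  ring

private theorem det_mul_expand {R : Type*} [CommRing R] {p : ℕ} (M N : Matrix (Fin p) (Fin p) R) :
    ∑ τ : Perm (Fin p), ∑ σ : Perm (Fin p),
      ((Perm.sign σ : ℤ) : R) * ∏ i, M (σ i) (τ i) * N (τ i) i = M.det * N.det := by
  calc
    ∑ τ : Perm (Fin p), ∑ σ : Perm (Fin p),
        ((Perm.sign σ : ℤ) : R) * ∏ i, M (σ i) (τ i) * N (τ i) i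
      = ∑ f ∈ univ.filter (fun f : Fin p → Fin p => Function.Bijective f),
        ∑ σ : Perm (Fin p), ((Perm.sign σ : ℤ) : R) * ∏ i, M (σ i) (f i) * N (f i) i := by
        refine (sum_bij (fun f h => Equiv.ofBijective f (mem_filter.1 h).2) (fun _ _ => mem_univ _)
          (fun _ _ _ _ h => by injection h)
          (fun b _ => ⟨b, mem_filter.2 ⟨mem_univ _, b.bijective⟩, Equiv.coe_fn_injective rfl⟩)
          (fun _ _ => rfl)).symm
    _ = ∑ f : Fin p → Fin p,
        ∑ σ : Perm (Fin p), ((Perm.sign σ : ℤ) : R) * ∏ i, M (σ i) (f i) * N (f i) i := by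
        refine sum_subset (filter_subset _ _) fun f _ hbij => ?_
        exact cb_aux M N fun hinj =>
          hbij (mem_filter.2 ⟨mem_univ _, (Finite.injective_iff_bijective).1 hinj⟩)
    _ = (M * N).det := by
        simp only [det_apply', Matrix.mul_apply, prod_univ_sum, mul_sum, Fintype.piFinset_univ]
        rw [Finset.sum_comm]
    _ = M.det * N.det := det_mul M N

theorem cauchy_binet {R : Type*} [CommRing R] {p q : ℕ}
    (A : Matrix (Fin p) (Fin q) R) (B : Matrix (Fin q) (Fin p) R) :
    (A * B).det = ∑ S : Finset (Fin q), if h : S.card = p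
      then (A.submatrix id (S.orderEmbOfFin h)).det * (B.submatrix (S.orderEmbOfFin h) id).det
      else 0 := by
  classical
  have step1 : (A * B).det = ∑ f : Fin p → Fin q, ∑ σ : Perm (Fin p),
      ((Perm.sign σ : ℤ) : R) * ∏ i, A (σ i) (f i) * B (f i) i := by
    simp only [det_apply', Matrix.mul_apply, prod_univ_sum, mul_sum, Fintype.piFinset_univ]
    rw [Finset.sum_comm]
  have step2 : ∑ f : Fin p → Fin q, ∑ σ : Perm (Fin p),
      ((Perm.sign σ : ℤ) : R) * ∏ i, A (σ i) (f i) * B (f i) i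
      = ∑ f ∈ univ.filter (fun f : Fin p → Fin q => Function.Injective f),
        ∑ σ : Perm (Fin p), ((Perm.sign σ : ℤ) : R) * ∏ i, A (σ i) (f i) * B (f i) i :=
    (sum_subset (filter_subset _ _) fun f _ hf =>
      cb_aux A B fun hinj => hf (mem_filter.2 ⟨mem_univ _, hinj⟩)).symm
  have step3 : ∑ f ∈ univ.filter (fun f : Fin p → Fin q => Function.Injective f),
      ∑ σ : Perm (Fin p), ((Perm.sign σ : ℤ) : R) * ∏ i, A (σ i) (f i) * B (f i) i
      = ∑ S ∈ Finset.powersetCard p (univ : Finset (Fin q)),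
        ∑ f ∈ (univ.filter (fun f : Fin p → Fin q => Function.Injective f)).filter
            (fun f => univ.image f = S),
          ∑ σ : Perm (Fin p), ((Perm.sign σ : ℤ) : R) * ∏ i, A (σ i) (f i) * B (f i) i := by
    refine (sum_fiberwise_of_maps_to (fun f hf => ?_) _).symm
    rw [mem_powersetCard_univ]
    rw [Finset.card_image_of_injective _ (mem_filter.1 hf).2, card_univ, Fintype.card_fin]
  rw [step1, step2, step3]
  have step4 : ∀ S ∈ Finset.powersetCard p (univ : Finset (Fin q)),
      (∑ f ∈ (univ.filter (fun f : Fin p → Fin q => Function.Injective f)).filter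
            (fun f => univ.image f = S),
          ∑ σ : Perm (Fin p), ((Perm.sign σ : ℤ) : R) * ∏ i, A (σ i) (f i) * B (f i) i)
      = if h : S.card = p
        then (A.submatrix id (S.orderEmbOfFin h)).det * (B.submatrix (S.orderEmbOfFin h) id).det
        else 0 := by
    intro S hS
    have hcard : S.card = p := mem_powersetCard_univ.1 hS
    rw [dif_pos hcard]
    set e := S.orderEmbOfFin hcard with he
    have himg : univ.image ⇑e = S := by
      ext x
      simp only [mem_image, mem_univ, true_and]
      rw [show (∃ i, e i = x) ↔ x ∈ Set.range ⇑e from (Set.mem_range).symm,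
        Finset.range_orderEmbOfFin]
      exact Iff.rfl
    have hbij : ∑ f ∈ (univ.filter (fun f : Fin p → Fin q => Function.Injective f)).filter
            (fun f => univ.image f = S),
          ∑ σ : Perm (Fin p), ((Perm.sign σ : ℤ) : R) * ∏ i, A (σ i) (f i) * B (f i) i
        = ∑ τ : Perm (Fin p),
          ∑ σ : Perm (Fin p), ((Perm.sign σ : ℤ) : R) *
            ∏ i, A (σ i) ((⇑e ∘ ⇑τ) i) * B ((⇑e ∘ ⇑τ) i) i := by
      refine (sum_bij (fun (τ : Perm (Fin p)) _ => ⇑e ∘ ⇑τ) ?_ ?_ ?_ ?_).symm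
      · intro τ _
        refine mem_filter.2 ⟨mem_filter.2 ⟨mem_univ _, ?_⟩, ?_⟩
        · exact (S.orderEmbOfFin hcard).injective.comp τ.injective
        · rw [← Finset.image_image, Finset.image_univ_equiv, himg]
      · intro τ₁ _ τ₂ _ h
        exact Equiv.ext fun i => (S.orderEmbOfFin hcard).injective (congrFun h i)
      · intro f hf
        have hf' := mem_filter.1 hf
        have hinj : Function.Injective f := (mem_filter.1 hf'.1).2
        have himgf : univ.image f = S := hf'.2
        have hmem : ∀ i, f i ∈ S := fun i => himgf ▸ mem_image_of_mem f (mem_univ i)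
        set g : Fin p → Fin p := fun i => (S.orderIsoOfFin hcard).symm ⟨f i, hmem i⟩ with hg
        have hge : ∀ i, e (g i) = f i := by
          intro i
          rw [he, ← Finset.coe_orderIsoOfFin_apply, hg]
          simp
        have hginj : Function.Injective g := by
          intro i j hij
          exact hinj (by rw [← hge i, ← hge j, hij])
        refine ⟨Equiv.ofBijective g (Finite.injective_iff_bijective.1 hginj), mem_univ _, ?_⟩
        exact funext fun i => hge i
      · intro τ _
        rfl
    rw [hbij]
    exact det_mul_expand (A.submatrix id ⇑e) (B.submatrix ⇑e id)
  rw [Finset.sum_congr rfl step4]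
  refine sum_subset (subset_univ _) fun S _ hS => ?_
  rw [dif_neg fun h => hS (mem_powersetCard_univ.2 h)]

theorem image_orderEmbOfFin {α : Type*} [LinearOrder α] [DecidableEq α] (s : Finset α) {k : ℕ}
    (h : s.card = k) : Finset.image ⇑(s.orderEmbOfFin h) univ = s := by
  ext x
  simp only [Finset.mem_image, mem_univ, true_and]
  rw [show (∃ i, s.orderEmbOfFin h i = x) ↔ x ∈ Set.range ⇑(s.orderEmbOfFin h) from
    (Set.mem_range).symm, Finset.range_orderEmbOfFin]
  exact Iff.rfl

theorem sum_emb {α β : Type*} [LinearOrder α] [DecidableEq α] [AddCommMonoid β] (W : Finset α)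
    {p : ℕ} (h : W.card = p) (f : α → β) :
    ∑ i, f (W.orderEmbOfFin h i) = ∑ x ∈ W, f x := by
  have himg := Finset.sum_image (s := (Finset.univ : Finset (Fin p))) (f := f)
    (g := ⇑(W.orderEmbOfFin h)) (fun x _ y _ hxy => (W.orderEmbOfFin h).injective hxy)
  rw [image_orderEmbOfFin W h] at himg
  exact himg.symm


theorem det_orderEmb_irrel {n : ℕ} {R : Type*} [CommRing R] (N : Matrix (Fin n) (Fin n) R)
    (W : Finset (Fin n)) {p : ℕ} (h : W.card = p) :
    (N.submatrix ⇑(W.orderEmbOfFin h) ⇑(W.orderEmbOfFin h)).det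
      = (N.submatrix ⇑(W.orderEmbOfFin rfl) ⇑(W.orderEmbOfFin rfl)).det := by
  subst h
  rfl


theorem det_updateColumn_single {R : Type*} [CommRing R] {p : ℕ}
    (M : Matrix (Fin (p+1)) (Fin (p+1)) R) (i₀ : Fin (p+1)) :
    (M.updateCol i₀ (Pi.single i₀ 1)).det
      = (M.submatrix i₀.succAbove i₀.succAbove).det := by
  classical
  set τ : (Fin p ⊕ Unit) ≃ Fin (p+1) :=
    (Equiv.optionEquivSumPUnit (Fin p)).symm.trans (finSuccEquiv' i₀).symm with hτ
  have hτl : ∀ j : Fin p, τ (Sum.inl j) = i₀.succAbove j := fun j => by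
    simp [hτ, finSuccEquiv'_symm_some]
  have hτr : ∀ u : Unit, τ (Sum.inr u) = i₀ := fun _ => by simp [hτ, finSuccEquiv'_symm_none]
  rw [← Matrix.det_submatrix_equiv_self τ]
  have hblocks : (M.updateCol i₀ (Pi.single i₀ 1)).submatrix ⇑τ ⇑τ
      = Matrix.fromBlocks (M.submatrix i₀.succAbove i₀.succAbove) 0
          (Matrix.of fun (_ : Unit) j => M i₀ (i₀.succAbove j)) 1 := by
    ext (i | i) (j | j)
    · simp [Matrix.updateCol_apply, hτl, Fin.succAbove_ne]
    · cases j
      simp [Matrix.updateCol_apply, hτl, hτr, Pi.single_eq_of_ne (Fin.succAbove_ne i₀ i)]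
    · cases i
      simp [Matrix.updateCol_apply, hτl, hτr, Fin.succAbove_ne]
    · cases i; cases j
      simp [Matrix.updateCol_apply, hτr]
  rw [hblocks, Matrix.det_fromBlocks_zero₁₂, Matrix.det_one, mul_one]


end CauchyBinet

namespace WMG

open Finset Matrix Equiv Equiv.Perm MvPolynomial Relation

variable {n m : ℕ}

/-- The incidence matrix of `G` over a ring `R`. -/
def incM (G : WMG (Fin n) (Fin m)) (R : Type*) [Ring R] : Matrix (Fin n) (Fin m) R :=
  Matrix.of fun a k =>
    (if (G.ends k).1 = a then (1 : R) else 0) - (if (G.ends k).2 = a then 1 else 0)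

theorem incM_map (G : WMG (Fin n) (Fin m)) {R S : Type*} [Ring R] [Ring S] (f : R →+* S) :
    (G.incM R).map ⇑f = G.incM S := by
  ext a k
  simp only [incM, Matrix.map_apply, Matrix.of_apply, map_sub]
  congr 1 <;> split_ifs <;> simp

theorem lap_eq_inc (G : WMG (Fin n) (Fin m)) (ℓ : Fin m → ℝ) :
    G.lap ℓ = G.incM ℝ * Matrix.diagonal (fun k => (ℓ k)⁻¹) * (G.incM ℝ)ᵀ := by
  ext a b
  have hrhs : (G.incM ℝ * Matrix.diagonal (fun k => (ℓ k)⁻¹) * (G.incM ℝ)ᵀ) a b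
      = ∑ k, G.incM ℝ a k * (ℓ k)⁻¹ * G.incM ℝ b k := by
    rw [Matrix.mul_apply]
    exact Finset.sum_congr rfl fun k _ => by
      rw [Matrix.mul_diagonal, Matrix.transpose_apply]
  rw [hrhs]
  by_cases hab : a = b
  · subst hab
    rw [lap]
    simp only [Matrix.of_apply, if_pos rfl]
    refine Finset.sum_congr rfl fun k _ => ?_
    simp only [incM, Matrix.of_apply]
    split_ifs <;> simp_all <;> ring
  · rw [lap]
    simp only [Matrix.of_apply, if_neg hab]
    rw [← Finset.sum_neg_distrib]
    refine Finset.sum_congr rfl fun k _ => ?_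
    simp only [incM, Matrix.of_apply, Prod.ext_iff]
    split_ifs <;> simp_all <;> ring

theorem incM_colsum (G : WMG (Fin n) (Fin m)) {R : Type*} [Ring R] (k : Fin m) :
    ∑ a, G.incM R a k = 0 := by
  simp only [incM, Matrix.of_apply, Finset.sum_sub_distrib]
  rw [Finset.sum_ite_eq univ (G.ends k).1 (fun _ => (1 : R)),
    Finset.sum_ite_eq univ (G.ends k).2 (fun _ => (1 : R))]
  simp

/-- Determinant of the submatrix of the incidence matrix with rows `W`, columns `S`. -/
noncomputable def Ddet (G : WMG (Fin n) (Fin m)) (W : Finset (Fin n)) (S : Finset (Fin m)) : ℚ :=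
  if h : S.card = W.card then
    ((G.incM ℚ).submatrix ⇑(W.orderEmbOfFin rfl) ⇑(S.orderEmbOfFin h)).det else 0

/-- The "forest polynomial" attached to a set `W` of vertices. -/
noncomputable def FP (G : WMG (Fin n) (Fin m)) (W : Finset (Fin n)) : MvPolynomial (Fin m) ℚ :=
  ∑ S : Finset (Fin m), MvPolynomial.C (G.Ddet W S ^ 2) * ∏ k ∈ Sᶜ, MvPolynomial.X k

theorem det_cast (G : WMG (Fin n) (Fin m)) {p : ℕ} (r : Fin p → Fin n) (c : Fin p → Fin m) :
    (((G.incM ℚ).submatrix r c).det : ℝ) = ((G.incM ℝ).submatrix r c).det := by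
  rw [show ((G.incM ℝ).submatrix r c) = ((G.incM ℚ).submatrix r c).map ⇑(algebraMap ℚ ℝ) by
    rw [← Matrix.submatrix_map, incM_map]]
  rw [← (eq_ratCast (algebraMap ℚ ℝ) (((G.incM ℚ).submatrix r c)).det), RingHom.map_det,
    RingHom.mapMatrix_apply]

theorem aeval_FP (G : WMG (Fin n) (Fin m)) (W : Finset (Fin n)) (ℓ : Fin m → ℝ)
    (hℓ : ∀ k, 0 < ℓ k) :
    (MvPolynomial.aeval ℓ) (G.FP W)
      = (∏ k, ℓ k) *
        ((G.lap ℓ).submatrix ⇑(W.orderEmbOfFin rfl) ⇑(W.orderEmbOfFin rfl)).det := by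
  classical
  set e := W.orderEmbOfFin rfl
  set M : Matrix (Fin W.card) (Fin m) ℝ := (G.incM ℝ).submatrix ⇑e id with hM
  set d : Fin m → ℝ := fun k => (ℓ k)⁻¹ with hd
  have hfact : (G.lap ℓ).submatrix ⇑e ⇑e = M * (Matrix.diagonal d * Mᵀ) := by
    rw [lap_eq_inc, Matrix.mul_assoc]
    ext i j
    rw [Matrix.submatrix_apply, Matrix.mul_apply, Matrix.mul_apply]
    refine Finset.sum_congr rfl fun k _ => ?_
    rw [Matrix.diagonal_mul, Matrix.diagonal_mul, Matrix.transpose_apply, Matrix.transpose_apply]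
    rfl
  rw [hfact, cauchy_binet M (Matrix.diagonal d * Mᵀ)]
  rw [Finset.mul_sum]
  have key : ∀ S : Finset (Fin m),
      (∏ k, ℓ k) * (if h : S.card = W.card
        then (M.submatrix id ⇑(S.orderEmbOfFin h)).det *
          ((Matrix.diagonal d * Mᵀ).submatrix ⇑(S.orderEmbOfFin h) id).det
        else 0)
      = ((G.Ddet W S : ℝ)) ^ 2 * ∏ k ∈ Sᶜ, ℓ k := by
    intro S
    by_cases h : S.card = W.card
    · rw [dif_pos h]
      set c := S.orderEmbOfFin h
      have h1 : (Matrix.diagonal d * Mᵀ).submatrix ⇑c id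
          = Matrix.of fun i j => d (c i) * ((Mᵀ).submatrix ⇑c id) i j := by
        ext i j
        simp [Matrix.diagonal_mul]
      have h2 : ((Matrix.diagonal d * Mᵀ).submatrix ⇑c id).det
          = (∏ i, d (c i)) * (M.submatrix id ⇑c).det := by
        rw [h1, Matrix.det_mul_column]
        congr 1
        rw [show (Mᵀ).submatrix ⇑c id = (M.submatrix id ⇑c)ᵀ from rfl, Matrix.det_transpose]
      have h3 : (∏ i, d (c i)) = ∏ k ∈ S, d k := by
        rw [← image_orderEmbOfFin S h, Finset.prod_image]
        intro x _ y _ hxy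
        exact (S.orderEmbOfFin h).injective hxy
      have h4 : (∏ k, ℓ k) * ∏ k ∈ S, d k = ∏ k ∈ Sᶜ, ℓ k := by
        rw [← Finset.prod_mul_prod_compl S ℓ, hd]
        rw [mul_comm (∏ k ∈ S, ℓ k) _, mul_assoc, ← Finset.prod_mul_distrib]
        rw [Finset.prod_congr rfl (fun k _ => mul_inv_cancel₀ (hℓ k).ne'), Finset.prod_const_one,
          mul_one]
      have h5 : (M.submatrix id ⇑c).det = (G.Ddet W S : ℝ) := by
        rw [Ddet, dif_pos h, det_cast]
        rfl
      rw [h2, h3, h5, ← h4]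
      ring
    · rw [dif_neg h, Ddet, dif_neg h]
      simp
  rw [Finset.sum_congr rfl fun S _ => key S]
  rw [FP, map_sum]
  refine (Finset.sum_congr rfl fun S _ => ?_).symm
  rw [_root_.map_mul, MvPolynomial.aeval_C, map_prod]
  simp only [MvPolynomial.aeval_X]
  push_cast
  rfl


theorem step_symm {V E : Type} (G : WMG V E) (S : Set E) {a b : V} (h : G.Step S a b) :
    G.Step S b a := by
  obtain ⟨k, hk, h | h⟩ := h
  · exact ⟨k, hk, Or.inr h⟩
  · exact ⟨k, hk, Or.inl h⟩

theorem rtg_symm {V E : Type} (G : WMG V E) (S : Set E) {a b : V}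
    (h : Relation.ReflTransGen (G.Step S) a b) : Relation.ReflTransGen (G.Step S) b a :=
  by haveI : Std.Symm (G.Step S) := ⟨fun _ _ hs => G.step_symm S hs⟩; exact Std.Symm.symm _ _ h

/-- Point mass over ℤ, oriented to match `incM`. -/
def dInt (a x : Fin n) : ℤ := if a = x then 1 else 0

theorem walk_mem_span (G : WMG (Fin n) (Fin m)) (S : Finset (Fin m)) {a b : Fin n}
    (h : Relation.ReflTransGen (G.Step ↑S) a b) :
    (fun x => dInt a x - dInt b x) ∈
      Submodule.span ℤ (Set.range (fun (k : {k // k ∈ S}) (x : Fin n) => G.incM ℤ x k.1)) := by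
  induction h with
  | refl =>
    have : (fun x => dInt a x - dInt a x) = (0 : Fin n → ℤ) := by
      funext x; simp
    rw [this]
    exact Submodule.zero_mem _
  | tail hab hstep ih =>
    rename_i w
    obtain ⟨k, hk, hends⟩ := hstep
    rename_i c
    have hmem : (fun x => G.incM ℤ x k) ∈
        Submodule.span ℤ (Set.range (fun (k : {k // k ∈ S}) (x : Fin n) => G.incM ℤ x k.1)) :=
      Submodule.subset_span ⟨⟨k, hk⟩, rfl⟩
    rcases hends with hor | hor
    · have key : (fun x => dInt a x - dInt w x)
          = (fun x => dInt a x - dInt c x) + fun x => G.incM ℤ x k := by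
        funext x
        simp only [Pi.add_apply, incM, dInt, hor, Matrix.of_apply]
        ring
      rw [key]
      exact Submodule.add_mem _ ih hmem
    · have key : (fun x => dInt a x - dInt w x)
          = (fun x => dInt a x - dInt c x) - fun x => G.incM ℤ x k := by
        funext x
        simp only [Pi.sub_apply, incM, dInt, hor, Matrix.of_apply]
        ring
      rw [key]
      exact Submodule.sub_mem _ ih hmem

theorem det_cast_int (G : WMG (Fin n) (Fin m)) {p : ℕ} (r : Fin p → Fin n) (c : Fin p → Fin m) :
    ((((G.incM ℤ).submatrix r c).det : ℤ) : ℚ) = ((G.incM ℚ).submatrix r c).det := by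
  rw [show ((G.incM ℚ).submatrix r c) = ((G.incM ℤ).submatrix r c).map ⇑(algebraMap ℤ ℚ) by
    rw [← Matrix.submatrix_map, incM_map]]
  rw [← (eq_intCast (algebraMap ℤ ℚ) (((G.incM ℤ).submatrix r c)).det), RingHom.map_det,
    RingHom.mapMatrix_apply]

theorem Ddet_sq_of_conn (G : WMG (Fin n) (Fin m)) (b : Fin n) (S : Finset (Fin m))
    (hcard : S.card = ({b}ᶜ : Finset (Fin n)).card) (hconn : G.ConnectedVia ↑S) :
    G.Ddet {b}ᶜ S ^ 2 = 1 := by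
  classical
  set W : Finset (Fin n) := {b}ᶜ with hW
  set e := W.orderEmbOfFin rfl with he
  set c := S.orderEmbOfFin hcard with hc
  set M : Matrix (Fin W.card) (Fin W.card) ℤ := (G.incM ℤ).submatrix ⇑e ⇑c with hM
  have heb : ∀ i, e i ≠ b := by
    intro i hib
    have : e i ∈ W := W.orderEmbOfFin_mem rfl i
    rw [hib, hW] at this
    simp at this
  have hz : ∀ i : Fin W.card, ∃ coef : {k // k ∈ S} → ℤ,
      (∑ k : {k // k ∈ S}, coef k • fun x => G.incM ℤ x k.1)
        = fun x => dInt (e i) x - dInt b x := by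
    intro i
    have hsp := G.walk_mem_span S (hconn (e i) b)
    rwa [Submodule.mem_span_range_iff_exists_fun] at hsp
  choose coef hcoef using hz
  set N : Matrix (Fin W.card) (Fin W.card) ℤ :=
    Matrix.of fun j i => coef i ⟨c j, S.orderEmbOfFin_mem hcard j⟩ with hN
  have hbijmap : Function.Bijective
      (fun j : Fin W.card => (⟨c j, S.orderEmbOfFin_mem hcard j⟩ : {k // k ∈ S})) := by
    rw [Fintype.bijective_iff_injective_and_card]
    constructor
    · intro j1 j2 hj
      exact c.injective (by simpa [Subtype.ext_iff] using hj)
    · rw [Fintype.card_coe, hcard, Fintype.card_fin]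
  have hMN : M * N = 1 := by
    ext i' i
    rw [Matrix.mul_apply]
    have hev := congrFun (hcoef i) (e i')
    rw [Finset.sum_apply] at hev
    simp only [Pi.smul_apply, smul_eq_mul] at hev
    have hre : ∑ j, M i' j * N j i
        = ∑ k : {k // k ∈ S}, coef i k * G.incM ℤ (e i') k.1 := by
      refine Fintype.sum_bijective _ hbijmap _ _ fun j => ?_
      rw [mul_comm]
      rfl
    rw [hre, hev]
    by_cases hii : i' = i
    · subst hii
      rw [show dInt (e i') (e i') = 1 by simp [dInt],
        show dInt b (e i') = 0 by simp [dInt, Ne.symm (heb i')], Matrix.one_apply, if_pos rfl]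
      norm_num
    · have hne : e i ≠ e i' := fun hh => hii (e.injective hh).symm
      rw [show dInt (e i) (e i') = 0 by simp [dInt, hne],
        show dInt b (e i') = 0 by simp [dInt, Ne.symm (heb i')], Matrix.one_apply, if_neg hii]
      norm_num
  have hdet : M.det * N.det = 1 := by
    rw [← Matrix.det_mul, hMN, Matrix.det_one]
  have hpm : M.det = 1 ∨ M.det = -1 :=
    Int.isUnit_iff.mp (IsUnit.of_mul_eq_one _ hdet)
  have hDd : G.Ddet W S = ((M.det : ℤ) : ℚ) := by
    rw [Ddet, dif_pos hcard, hM, det_cast_int]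
  rw [hDd]
  rcases hpm with h | h <;> rw [h] <;> norm_num

theorem Ddet_eq_zero_of_not_conn (G : WMG (Fin n) (Fin m)) (b : Fin n) (S : Finset (Fin m))
    (hcard : S.card = ({b}ᶜ : Finset (Fin n)).card) (hdisc : ¬ G.ConnectedVia ↑S) :
    G.Ddet {b}ᶜ S = 0 := by
  classical
  obtain ⟨x0, y0, hxy⟩ : ∃ x y, ¬ Relation.ReflTransGen (G.Step ↑S) x y := by
    by_contra h
    push_neg at h
    exact hdisc fun a b => h a b
  obtain ⟨z, hz⟩ : ∃ z, ¬ Relation.ReflTransGen (G.Step ↑S) z b := by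
    by_cases hb : Relation.ReflTransGen (G.Step ↑S) x0 b
    · exact ⟨y0, fun h => hxy (hb.trans (G.rtg_symm _ h))⟩
    · exact ⟨x0, hb⟩
  set W : Finset (Fin n) := {b}ᶜ with hW
  set e := W.orderEmbOfFin rfl with he
  set c := S.orderEmbOfFin hcard with hc
  set C : Set (Fin n) := {x | Relation.ReflTransGen (G.Step ↑S) z x} with hC
  have hzC : z ∈ C := Relation.ReflTransGen.refl
  have hbC : b ∉ C := hz
  have hedge : ∀ k ∈ S, ((G.ends k).1 ∈ C ↔ (G.ends k).2 ∈ C) := by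
    intro k hk
    constructor
    · intro h
      exact h.tail ⟨k, hk, Or.inl rfl⟩
    · intro h
      exact h.tail ⟨k, hk, Or.inr rfl⟩
  set ρ : Fin W.card → ℚ := fun i => if e i ∈ C then 1 else 0 with hρ
  have hρ0 : ρ ≠ 0 := by
    have hzW : z ∈ W := by
      rw [hW, Finset.mem_compl, Finset.mem_singleton]
      intro hzb
      exact hz (hzb ▸ Relation.ReflTransGen.refl)
    have : z ∈ Finset.image ⇑e Finset.univ := by rw [he, image_orderEmbOfFin]; exact hzW
    obtain ⟨i, -, hi⟩ := Finset.mem_image.mp this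
    intro h0
    have := congrFun h0 i
    rw [hρ] at this
    simp only [hi, Pi.zero_apply] at this
    rw [if_pos hzC] at this
    exact one_ne_zero this
  have hvec : ρ ᵥ* ((G.incM ℚ).submatrix ⇑e ⇑c) = 0 := by
    funext j
    simp only [Matrix.vecMul, dotProduct, Matrix.submatrix_apply, Pi.zero_apply]
    have hterm : ∀ x : Fin n, (if x ∈ C then (1:ℚ) else 0) * G.incM ℚ x (c j)
        = (if (G.ends (c j)).1 = x then (if x ∈ C then (1:ℚ) else 0) else 0)
          - (if (G.ends (c j)).2 = x then (if x ∈ C then (1:ℚ) else 0) else 0) := by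
      intro x
      simp only [incM, Matrix.of_apply]
      split_ifs <;> ring
    calc ∑ i, ρ i * G.incM ℚ (e i) (c j)
        = ∑ x ∈ W, (if x ∈ C then (1:ℚ) else 0) * G.incM ℚ x (c j) := by
          rw [← sum_emb W rfl (fun x => (if x ∈ C then (1:ℚ) else 0) * G.incM ℚ x (c j))]
      _ = ∑ x : Fin n, (if x ∈ C then (1:ℚ) else 0) * G.incM ℚ x (c j) := by
          refine Finset.sum_subset (Finset.subset_univ W) fun x _ hx => ?_
          have hxb : x = b := by
            by_contra hne
            exact hx (by rw [hW]; simp [hne])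
          rw [hxb, if_neg hbC, zero_mul]
      _ = 0 := by
          rw [Finset.sum_congr rfl fun x _ => hterm x, Finset.sum_sub_distrib,
            Finset.sum_ite_eq Finset.univ (G.ends (c j)).1 (fun x => if x ∈ C then (1:ℚ) else 0),
            Finset.sum_ite_eq Finset.univ (G.ends (c j)).2 (fun x => if x ∈ C then (1:ℚ) else 0)]
          simp only [Finset.mem_univ, if_true]
          rw [if_congr (hedge (c j) (S.orderEmbOfFin_mem hcard j)) rfl rfl, sub_self]
  have hdet0 : ((G.incM ℚ).submatrix ⇑e ⇑c).det = 0 :=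
    Matrix.exists_vecMul_eq_zero_iff.mp ⟨ρ, hρ0, hvec⟩
  rw [Ddet, dif_pos hcard]
  exact hdet0

theorem Ddet_sq_indicator (G : WMG (Fin n) (Fin m)) (b : Fin n) (S : Finset (Fin m)) :
    (G.Ddet {b}ᶜ S) ^ 2 = if G.IsSpanningTree S then 1 else 0 := by
  have hWcard : ({b}ᶜ : Finset (Fin n)).card = n - 1 := by
    rw [Finset.card_compl, Finset.card_singleton, Fintype.card_fin]
  have hn : 0 < n := b.pos
  by_cases hc : S.card = ({b}ᶜ : Finset (Fin n)).card
  · by_cases hconn : G.ConnectedVia ↑S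
    · have hST : G.IsSpanningTree S := by
        refine ⟨?_, hconn⟩
        rw [hc, hWcard, Fintype.card_fin]
        omega
      rw [if_pos hST]
      exact G.Ddet_sq_of_conn b S hc hconn
    · rw [G.Ddet_eq_zero_of_not_conn b S hc hconn, if_neg fun hST => hconn hST.2]
      norm_num
  · have hnot : ¬ G.IsSpanningTree S := by
      intro hST
      have h1 := hST.1
      rw [Fintype.card_fin] at h1
      exact hc (by omega)
    rw [Ddet, dif_neg hc, if_neg hnot]
    norm_num

theorem aeval_FP_eval (G : WMG (Fin n) (Fin m)) (W : Finset (Fin n)) (ℓ : Fin m → ℝ) :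
    (MvPolynomial.aeval ℓ) (G.FP W)
      = ∑ S : Finset (Fin m), ((G.Ddet W S : ℝ)) ^ 2 * ∏ k ∈ Sᶜ, ℓ k := by
  rw [FP, map_sum]
  refine Finset.sum_congr rfl fun S _ => ?_
  rw [_root_.map_mul, MvPolynomial.aeval_C, map_prod]
  simp only [MvPolynomial.aeval_X]
  push_cast
  rfl

theorem eta_eq_aeval_FP (G : WMG (Fin n) (Fin m)) (b : Fin n) (ℓ : Fin m → ℝ) :
    G.eta ℓ = (MvPolynomial.aeval ℓ) (G.FP {b}ᶜ) := by
  rw [aeval_FP_eval, eta]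
  refine Finset.sum_congr rfl fun S _ => ?_
  rw [show ((G.Ddet {b}ᶜ S : ℝ)) ^ 2 = (((G.Ddet {b}ᶜ S ^ 2 : ℚ)) : ℝ) by push_cast; ring,
    G.Ddet_sq_indicator b S]
  split_ifs <;> simp


theorem lap_colsum (G : WMG (Fin n) (Fin m)) (ℓ : Fin m → ℝ) :
    (fun _ : Fin n => (1 : ℝ)) ᵥ* G.lap ℓ = 0 := by
  rw [lap_eq_inc, ← Matrix.vecMul_vecMul, ← Matrix.vecMul_vecMul]
  have h1 : (fun _ : Fin n => (1 : ℝ)) ᵥ* G.incM ℝ = 0 := by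
    funext k
    simp only [Matrix.vecMul, dotProduct, one_mul, Pi.zero_apply]
    exact G.incM_colsum k
  rw [h1, Matrix.zero_vecMul, Matrix.zero_vecMul]

theorem transpose_mulVec_incM (G : WMG (Fin n) (Fin m)) (d : Fin n → ℝ) (k : Fin m) :
    ((G.incM ℝ)ᵀ *ᵥ d) k = d (G.ends k).1 - d (G.ends k).2 := by
  simp only [Matrix.mulVec, dotProduct, Matrix.transpose_apply, incM, Matrix.of_apply]
  have hterm : ∀ x, ((if (G.ends k).1 = x then (1:ℝ) else 0)
      - if (G.ends k).2 = x then 1 else 0) * d x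
      = (if (G.ends k).1 = x then d x else 0) - (if (G.ends k).2 = x then d x else 0) := by
    intro x
    split_ifs <;> ring
  rw [Finset.sum_congr rfl fun x _ => hterm x, Finset.sum_sub_distrib,
    Finset.sum_ite_eq Finset.univ (G.ends k).1 d, Finset.sum_ite_eq Finset.univ (G.ends k).2 d]
  simp

theorem qform_zero (G : WMG (Fin n) (Fin m)) (ℓ : Fin m → ℝ) (hℓ : ∀ k, 0 < ℓ k)
    {d : Fin n → ℝ} (h0 : d ⬝ᵥ (G.lap ℓ *ᵥ d) = 0) (k : Fin m) :
    d (G.ends k).1 = d (G.ends k).2 := by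
  set z := (G.incM ℝ)ᵀ *ᵥ d with hz
  have key : d ⬝ᵥ (G.lap ℓ *ᵥ d) = ∑ k, (ℓ k)⁻¹ * (z k) ^ 2 := by
    rw [lap_eq_inc, ← Matrix.mulVec_mulVec, ← Matrix.mulVec_mulVec, Matrix.dotProduct_mulVec,
      ← Matrix.mulVec_transpose]
    simp only [← hz]
    simp only [dotProduct, Matrix.mulVec_diagonal]
    exact Finset.sum_congr rfl fun j _ => by ring
  rw [key] at h0
  have hzk : (ℓ k)⁻¹ * (z k) ^ 2 = 0 := by
    have hnn : ∀ j ∈ Finset.univ, 0 ≤ (ℓ j)⁻¹ * (z j) ^ 2 := fun j _ =>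
      mul_nonneg (inv_nonneg.mpr (hℓ j).le) (sq_nonneg _)
    exact (Finset.sum_eq_zero_iff_of_nonneg hnn).mp h0 k (Finset.mem_univ k)
  have hz0 : z k = 0 := by
    have := mul_eq_zero.mp hzk
    rcases this with h | h
    · exact absurd h (inv_ne_zero (hℓ k).ne')
    · exact pow_eq_zero_iff (by norm_num) |>.mp h
  have := G.transpose_mulVec_incM d k
  rw [← hz, hz0] at this
  linarith [this]

theorem ker_lap (G : WMG (Fin n) (Fin m)) (hG : G.Connected) (ℓ : Fin m → ℝ)
    (hℓ : ∀ k, 0 < ℓ k) {d : Fin n → ℝ} (hq : d ⬝ᵥ (G.lap ℓ *ᵥ d) = 0) (b : Fin n)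
    (hb : d b = 0) : d = 0 := by
  have hstep : ∀ x y : Fin n, G.Step Set.univ x y → d x = d y := by
    intro x y hs
    obtain ⟨k, -, hor | hor⟩ := hs
    · have := G.qform_zero ℓ hℓ hq k
      rw [hor] at this
      exact this
    · have := G.qform_zero ℓ hℓ hq k
      rw [hor] at this
      exact this.symm
  have hwalk : ∀ x y : Fin n, Relation.ReflTransGen (G.Step Set.univ) x y → d x = d y := by
    intro x y h
    induction h with
    | refl => rfl
    | tail _ hs ih => exact ih.trans (hstep _ _ hs)
  funext x
  rw [Pi.zero_apply, ← hb]
  exact hwalk x b (hG x b)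

theorem res_self (G : WMG (Fin n) (Fin m)) (hG : G.Connected) (ℓ : Fin m → ℝ)
    (hℓ : ∀ k, 0 < ℓ k) (a : Fin n) : G.res ℓ a a = 0 := by
  have h0 : G.lap ℓ *ᵥ (0 : Fin n → ℝ) = delta a - delta a ∧ (0 : Fin n → ℝ) a = 0 := by
    constructor
    · rw [Matrix.mulVec_zero, sub_self]
    · rfl
  have hEU : ∃! v : Fin n → ℝ, G.lap ℓ *ᵥ v = delta a - delta a ∧ v a = 0 :=
    ⟨0, h0, fun y hy => G.ker_lap hG ℓ hℓ
      (by rw [hy.1, sub_self]; simp) a hy.2⟩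
  rw [res, dif_pos hEU]
  have hch := hEU.unique hEU.exists.choose_spec h0
  rw [hch]
  rfl

theorem lapdet_ne_zero (G : WMG (Fin n) (Fin m)) (hG : G.Connected) (ℓ : Fin m → ℝ)
    (hℓ : ∀ k, 0 < ℓ k) (b : Fin n) {p : ℕ} (hp : ({b}ᶜ : Finset (Fin n)).card = p + 1) :
    ((G.lap ℓ).submatrix ⇑(({b}ᶜ : Finset (Fin n)).orderEmbOfFin hp)
      ⇑(({b}ᶜ : Finset (Fin n)).orderEmbOfFin hp)).det ≠ 0 := by
  classical
  set W : Finset (Fin n) := {b}ᶜ with hWdef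
  set e := W.orderEmbOfFin hp with he
  have heW : ∀ i, e i ∈ W := fun i => W.orderEmbOfFin_mem hp i
  have heb : ∀ i, e i ≠ b := by
    intro i h
    have h2 := heW i
    rw [h] at h2
    simp [hWdef] at h2
  have hWx : ∀ x : Fin n, x ∉ W → x = b := by
    intro x hx
    by_contra hne
    exact hx (by simp [hWdef, hne])
  set Qb : Matrix (Fin (p+1)) (Fin (p+1)) ℝ := (G.lap ℓ).submatrix ⇑e ⇑e with hQb
  have hrow : ∀ (v : Fin n → ℝ), v b = 0 → ∀ i : Fin (p+1),
      (G.lap ℓ *ᵥ v) (e i) = (Qb *ᵥ (fun j => v (e j))) i := by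
    intro v hvb i
    simp only [Matrix.mulVec, dotProduct, hQb, Matrix.submatrix_apply]
    calc ∑ y, G.lap ℓ (e i) y * v y
        = ∑ y ∈ W, G.lap ℓ (e i) y * v y := by
          refine (Finset.sum_subset (Finset.subset_univ W) fun x _ hx => ?_).symm
          rw [hWx x hx, hvb, mul_zero]
      _ = ∑ j, G.lap ℓ (e i) (e j) * v (e j) :=
          (sum_emb W hp (fun y => G.lap ℓ (e i) y * v y)).symm
  have hextb : ∀ w : Fin (p+1) → ℝ, Function.extend ⇑e w 0 b = 0 := by
    intro w
    rw [Function.extend_apply' _ _ _ (fun hh => by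
      obtain ⟨i, hi⟩ := hh
      exact heb i hi)]
    rfl
  have hexte : ∀ (w : Fin (p+1) → ℝ) (j), Function.extend ⇑e w 0 (e j) = w j := by
    intro w j
    exact Function.Injective.extend_apply e.injective w 0 j
  intro h0
  obtain ⟨w, hw0, hww⟩ := (Matrix.exists_mulVec_eq_zero_iff).mpr h0
  set v : Fin n → ℝ := Function.extend ⇑e w 0 with hv
  have hvb : v b = 0 := hextb w
  have hq : v ⬝ᵥ (G.lap ℓ *ᵥ v) = 0 := by
    rw [dotProduct]
    rw [← Finset.sum_subset (Finset.subset_univ W) (fun x _ hx => by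
      rw [hWx x hx, hvb, zero_mul])]
    rw [← sum_emb W hp (fun x => v x * (G.lap ℓ *ᵥ v) x)]
    refine Finset.sum_eq_zero fun i _ => ?_
    rw [hrow v hvb i, show (fun j => v (e j)) = w from funext (hexte w), hww]
    simp
  have hv0 : v = 0 := G.ker_lap hG ℓ hℓ hq b hvb
  apply hw0
  funext j
  rw [← hexte w j, ← hv, hv0]
  rfl

theorem n_le_m_add_one (G : WMG (Fin n) (Fin m)) (hG : G.Connected) (hn : 0 < n) :
    n ≤ m + 1 := by
  by_contra hcon
  push_neg at hcon
  set b : Fin n := ⟨0, hn⟩ with hb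
  have hWc : ({b}ᶜ : Finset (Fin n)).card = (n - 2) + 1 := by
    rw [Finset.card_compl, Finset.card_singleton, Fintype.card_fin]
    omega
  have hdet := G.lapdet_ne_zero hG (fun _ => 1) (fun _ => one_pos) b hWc
  apply hdet
  have h0 : G.FP {b}ᶜ = 0 := by
    rw [FP]
    refine Finset.sum_eq_zero fun S _ => ?_
    have hD : G.Ddet {b}ᶜ S = 0 := by
      rw [Ddet, dif_neg]
      intro hc
      have hSle : S.card ≤ m := by
        have := Finset.card_le_card (Finset.subset_univ S)
        rwa [Finset.card_univ, Fintype.card_fin] at this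
      omega
    rw [hD]
    simp
  have hFP := G.aeval_FP {b}ᶜ (fun _ => 1) (fun _ => one_pos)
  rw [h0, map_zero] at hFP
  rw [Finset.prod_const_one] at hFP
  rw [det_orderEmb_irrel]
  have := hFP.symm
  rwa [one_mul] at this

theorem res_eta (G : WMG (Fin n) (Fin m)) (hG : G.Connected) (ℓ : Fin m → ℝ)
    (hℓ : ∀ k, 0 < ℓ k) {a b : Fin n} (hab : a ≠ b) :
    G.res ℓ a b * G.eta ℓ = (MvPolynomial.aeval ℓ) (G.FP ({a, b}ᶜ)) := by
  classical
  set W : Finset (Fin n) := {b}ᶜ with hWdef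
  have haW : a ∈ W := by simp [hWdef, hab]
  have hWpos : 0 < W.card := Finset.card_pos.mpr ⟨a, haW⟩
  obtain ⟨p, hp⟩ : ∃ p, W.card = p + 1 := ⟨W.card - 1, by omega⟩
  set e := W.orderEmbOfFin hp with he
  have heW : ∀ i, e i ∈ W := fun i => W.orderEmbOfFin_mem hp i
  have heb : ∀ i, e i ≠ b := by
    intro i h
    have h2 := heW i
    rw [h] at h2
    simp [hWdef] at h2
  have hWx : ∀ x : Fin n, x ∉ W → x = b := by
    intro x hx
    by_contra hne
    exact hx (by simp [hWdef, hne])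
  obtain ⟨i₀, hi₀⟩ : ∃ i₀, e i₀ = a := by
    have h3 : a ∈ Finset.image ⇑e Finset.univ := by rw [he, image_orderEmbOfFin]; exact haW
    obtain ⟨i, -, hi⟩ := Finset.mem_image.mp h3
    exact ⟨i, hi⟩
  set Qb : Matrix (Fin (p+1)) (Fin (p+1)) ℝ := (G.lap ℓ).submatrix ⇑e ⇑e with hQb
  have hrow : ∀ (v : Fin n → ℝ), v b = 0 → ∀ i : Fin (p+1),
      (G.lap ℓ *ᵥ v) (e i) = (Qb *ᵥ (fun j => v (e j))) i := by
    intro v hvb i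
    simp only [Matrix.mulVec, dotProduct, hQb, Matrix.submatrix_apply]
    calc ∑ y, G.lap ℓ (e i) y * v y
        = ∑ y ∈ W, G.lap ℓ (e i) y * v y := by
          refine (Finset.sum_subset (Finset.subset_univ W) fun x _ hx => ?_).symm
          rw [hWx x hx, hvb, mul_zero]
      _ = ∑ j, G.lap ℓ (e i) (e j) * v (e j) :=
          (sum_emb W hp (fun y => G.lap ℓ (e i) y * v y)).symm
  have hextb : ∀ w : Fin (p+1) → ℝ, Function.extend ⇑e w 0 b = 0 := by
    intro w
    rw [Function.extend_apply' _ _ _ (fun hh => by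
      obtain ⟨i, hi⟩ := hh
      exact heb i hi)]
    rfl
  have hexte : ∀ (w : Fin (p+1) → ℝ) (j), Function.extend ⇑e w 0 (e j) = w j := by
    intro w j
    exact Function.Injective.extend_apply e.injective w 0 j
  have hdet : Qb.det ≠ 0 := G.lapdet_ne_zero hG ℓ hℓ b hp
  set u : Fin (p+1) → ℝ := Pi.single i₀ 1 with hu
  set w : Fin (p+1) → ℝ := Qb.det⁻¹ • (Qb.cramer u) with hw
  have hQbw : Qb *ᵥ w = u := by
    rw [hw, Matrix.mulVec_smul, Matrix.mulVec_cramer, smul_smul, inv_mul_cancel₀ hdet, one_smul]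
  set v : Fin n → ℝ := Function.extend ⇑e w 0 with hv
  have hvb : v b = 0 := hextb w
  have hve : ∀ j, v (e j) = w j := hexte w
  have hrowsW : ∀ i : Fin (p+1), (G.lap ℓ *ᵥ v) (e i) = (delta a - delta b) (e i) := by
    intro i
    rw [hrow v hvb i, show (fun j => v (e j)) = w from funext hve, hQbw]
    simp only [Pi.sub_apply, delta, hu]
    rw [if_neg (heb i)]
    by_cases hii : i = i₀
    · subst hii
      rw [if_pos hi₀, Pi.single_eq_same]
      norm_num
    · rw [if_neg (fun h => hii (e.injective (h.trans hi₀.symm))), Pi.single_eq_of_ne hii]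
      norm_num
  have hsol : G.lap ℓ *ᵥ v = delta a - delta b := by
    funext x
    by_cases hx : x ∈ W
    · have h3 : x ∈ Finset.image ⇑e Finset.univ := by rw [he, image_orderEmbOfFin]; exact hx
      obtain ⟨i, -, hi⟩ := Finset.mem_image.mp h3
      rw [← hi]
      exact hrowsW i
    · have hxb : x = b := hWx x hx
      rw [hxb]
      have hsum1 : ∑ y, (G.lap ℓ *ᵥ v) y = 0 := by
        calc ∑ y, (G.lap ℓ *ᵥ v) y = (fun _ => (1:ℝ)) ⬝ᵥ (G.lap ℓ *ᵥ v) := by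
              simp [dotProduct]
          _ = ((fun _ => (1:ℝ)) ᵥ* G.lap ℓ) ⬝ᵥ v := Matrix.dotProduct_mulVec _ _ _
          _ = 0 := by rw [G.lap_colsum ℓ, zero_dotProduct]
      have hsum2 : ∑ y, (delta a - delta b : Fin n → ℝ) y = 0 := by
        simp [delta, Finset.sum_sub_distrib]
      have hdecomp : ∀ f : Fin n → ℝ, ∑ y, f y = f b + ∑ y ∈ W, f y := by
        intro f
        rw [← Finset.sum_compl_add_sum {b} f, Finset.sum_singleton, ← hWdef]
        ring
      have hWeq : ∑ y ∈ W, (G.lap ℓ *ᵥ v) y = ∑ y ∈ W, (delta a - delta b : Fin n → ℝ) y := by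
        rw [← sum_emb W hp, ← sum_emb W hp]
        exact Finset.sum_congr rfl fun i _ => hrowsW i
      have h1 := hdecomp (G.lap ℓ *ᵥ v)
      have h2 := hdecomp (delta a - delta b)
      rw [hsum1] at h1
      rw [hsum2] at h2
      rw [Pi.sub_apply] at h2 ⊢
      linarith [hWeq]
  have hEU : ∃! v' : Fin n → ℝ, G.lap ℓ *ᵥ v' = delta a - delta b ∧ v' b = 0 := by
    refine ⟨v, ⟨hsol, hvb⟩, fun y hy => ?_⟩
    have hd : G.lap ℓ *ᵥ (y - v) = 0 := by
      rw [Matrix.mulVec_sub, hy.1, hsol, sub_self]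
    have hdb : (y - v) b = 0 := by rw [Pi.sub_apply, hy.2, hvb, sub_self]
    have hz := G.ker_lap hG ℓ hℓ (by rw [hd, dotProduct_zero]) b hdb
    exact sub_eq_zero.mp hz
  have hres : G.res ℓ a b = w i₀ := by
    rw [res, dif_pos hEU]
    have hch := hEU.unique hEU.exists.choose_spec ⟨hsol, hvb⟩
    rw [hch, ← hi₀]
    exact hve i₀
  have hwval : w i₀ = Qb.det⁻¹ * (Qb.updateCol i₀ u).det := by
    rw [hw, Pi.smul_apply, smul_eq_mul, Matrix.cramer_apply]
  set W' : Finset (Fin n) := {a, b}ᶜ with hW'def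
  have hW' : W'.card = p := by
    have hWc : W.card = n - 1 := by
      rw [hWdef, Finset.card_compl, Finset.card_singleton, Fintype.card_fin]
    rw [hW'def, Finset.card_compl, Finset.card_insert_of_notMem (by simp [hab]),
      Finset.card_singleton, Fintype.card_fin]
    omega
  have hcomp : ⇑e ∘ i₀.succAbove = ⇑(W'.orderEmbOfFin hW') := by
    refine Finset.orderEmbOfFin_unique hW' (fun x => ?_) ?_
    · have h1 : e (i₀.succAbove x) ≠ a := fun h =>
        (Fin.succAbove_ne i₀ x) (e.injective (h.trans hi₀.symm))
      have h2 : e (i₀.succAbove x) ≠ b := heb _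
      rw [hW'def]
      simp [h1, h2]
    · exact e.strictMono.comp (Fin.strictMono_succAbove i₀)
  have hminor : (Qb.updateCol i₀ u).det
      = ((G.lap ℓ).submatrix ⇑(W'.orderEmbOfFin rfl) ⇑(W'.orderEmbOfFin rfl)).det := by
    rw [hu, det_updateColumn_single Qb i₀, hQb, Matrix.submatrix_submatrix, hcomp,
      det_orderEmb_irrel]
  have heta : G.eta ℓ = (∏ k, ℓ k) * Qb.det := by
    rw [G.eta_eq_aeval_FP b ℓ, aeval_FP _ _ ℓ hℓ, hQb, ← det_orderEmb_irrel (G.lap ℓ) W hp]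
  have hFP' : (MvPolynomial.aeval ℓ) (G.FP W') = (∏ k, ℓ k) * (Qb.updateCol i₀ u).det := by
    rw [aeval_FP _ _ ℓ hℓ, hminor]
  rw [heta, hres, hwval, hFP']
  field_simp

/-- The quotient polynomial `FP {endpoints k}ᶜ / X k`. -/
noncomputable def QkP (G : WMG (Fin n) (Fin m)) (k : Fin m) : MvPolynomial (Fin m) ℚ :=
  ∑ S : Finset (Fin m), MvPolynomial.C (G.Ddet ({(G.ends k).1, (G.ends k).2}ᶜ) S ^ 2) *
    ∏ j ∈ Sᶜ.erase k, MvPolynomial.X j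

theorem Ddet_zero_of_mem (G : WMG (Fin n) (Fin m)) (k : Fin m) (S : Finset (Fin m))
    (hk : k ∈ S) : G.Ddet ({(G.ends k).1, (G.ends k).2}ᶜ) S = 0 := by
  rw [Ddet]
  split_ifs with h
  · set W : Finset (Fin n) := {(G.ends k).1, (G.ends k).2}ᶜ
    have hkim : k ∈ Finset.image ⇑(S.orderEmbOfFin h) Finset.univ := by
      rw [image_orderEmbOfFin]
      exact hk
    obtain ⟨j₀, -, hj₀⟩ := Finset.mem_image.mp hkim
    refine Matrix.det_eq_zero_of_column_eq_zero j₀ fun i => ?_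
    rw [Matrix.submatrix_apply, hj₀]
    have hiW : W.orderEmbOfFin rfl i ∈ W := W.orderEmbOfFin_mem rfl i
    have h1 : (G.ends k).1 ≠ W.orderEmbOfFin rfl i := by
      intro hh
      rw [← hh] at hiW
      simp [W] at hiW
    have h2 : (G.ends k).2 ≠ W.orderEmbOfFin rfl i := by
      intro hh
      rw [← hh] at hiW
      simp [W] at hiW
    simp only [incM, Matrix.of_apply]
    rw [if_neg h1, if_neg h2, sub_zero]
  · rfl

theorem FP_eq_X_mul_QkP (G : WMG (Fin n) (Fin m)) (k : Fin m) :
    G.FP ({(G.ends k).1, (G.ends k).2}ᶜ) = MvPolynomial.X k * G.QkP k := by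
  rw [FP, QkP, Finset.mul_sum]
  refine Finset.sum_congr rfl fun S _ => ?_
  by_cases hk : k ∈ S
  · rw [G.Ddet_zero_of_mem k S hk]
    simp
  · have hkc : k ∈ Sᶜ := Finset.mem_compl.mpr hk
    rw [← Finset.mul_prod_erase Sᶜ _ hkc]
    ring

theorem FP_homog (G : WMG (Fin n) (Fin m)) (W : Finset (Fin n)) :
    (G.FP W).IsHomogeneous (m - W.card) := by
  rw [FP]
  refine MvPolynomial.IsHomogeneous.sum _ _ _ fun S _ => ?_
  by_cases h : S.card = W.card
  · have hdeg : (∏ k ∈ Sᶜ, (MvPolynomial.X k : MvPolynomial (Fin m) ℚ)).IsHomogeneous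
        (m - W.card) := by
      have hc : Sᶜ.card = m - W.card := by
        rw [Finset.card_compl, Fintype.card_fin, h]
      rw [← hc]
      have := MvPolynomial.IsHomogeneous.prod Sᶜ
        (fun k => (MvPolynomial.X k : MvPolynomial (Fin m) ℚ)) (fun _ => 1)
        (fun i _ => MvPolynomial.isHomogeneous_X _ _)
      simpa using this
    have hC := (MvPolynomial.isHomogeneous_C (Fin m) (G.Ddet W S ^ 2)).mul hdeg
    rw [zero_add] at hC
    exact hC
  · have hD : G.Ddet W S = 0 := by rw [Ddet, dif_neg h]
    rw [hD]
    have : (MvPolynomial.C ((0:ℚ) ^ 2) * ∏ k ∈ Sᶜ, (MvPolynomial.X k : MvPolynomial (Fin m) ℚ))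
        = 0 := by simp
    rw [this]
    exact MvPolynomial.isHomogeneous_zero _ _ _

theorem QkP_homog (G : WMG (Fin n) (Fin m)) (k : Fin m) {d : ℕ}
    (hd : d + 1 = m - ({(G.ends k).1, (G.ends k).2}ᶜ : Finset (Fin n)).card) :
    (G.QkP k).IsHomogeneous d := by
  rw [QkP]
  refine MvPolynomial.IsHomogeneous.sum _ _ _ fun S _ => ?_
  by_cases h : S.card = ({(G.ends k).1, (G.ends k).2}ᶜ : Finset (Fin n)).card
  · by_cases hk : k ∈ S
    · rw [G.Ddet_zero_of_mem k S hk]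
      have : (MvPolynomial.C ((0:ℚ) ^ 2)
          * ∏ j ∈ Sᶜ.erase k, (MvPolynomial.X j : MvPolynomial (Fin m) ℚ)) = 0 := by simp
      rw [this]
      exact MvPolynomial.isHomogeneous_zero _ _ _
    · have hkc : k ∈ Sᶜ := Finset.mem_compl.mpr hk
      have hdeg : ((Sᶜ.erase k).card) = d := by
        rw [Finset.card_erase_of_mem hkc, Finset.card_compl, Fintype.card_fin, h]
        omega
      have hprod := MvPolynomial.IsHomogeneous.prod (Sᶜ.erase k)
        (fun j => (MvPolynomial.X j : MvPolynomial (Fin m) ℚ)) (fun _ => 1)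
        (fun i _ => MvPolynomial.isHomogeneous_X _ _)
      rw [Finset.sum_const, hdeg, smul_eq_mul, mul_one] at hprod
      have hC := (MvPolynomial.isHomogeneous_C (Fin m)
        (G.Ddet ({(G.ends k).1, (G.ends k).2}ᶜ) S ^ 2)).mul hprod
      rw [zero_add] at hC
      exact hC
  · have hD : G.Ddet ({(G.ends k).1, (G.ends k).2}ᶜ) S = 0 := by rw [Ddet, dif_neg h]
    rw [hD]
    have : (MvPolynomial.C ((0:ℚ) ^ 2)
        * ∏ j ∈ Sᶜ.erase k, (MvPolynomial.X j : MvPolynomial (Fin m) ℚ)) = 0 := by simp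
    rw [this]
    exact MvPolynomial.isHomogeneous_zero _ _ _

end WMG

/-- The `i`-th elementary symmetric polynomial of the family `ℓ`. -/
noncomputable def esymE {E : Type} [Fintype E] [DecidableEq E] (i : ℕ) (ℓ : E → ℝ) : ℝ :=
  ∑ s ∈ Finset.powersetCard i (Finset.univ : Finset E), ∏ k ∈ s, ℓ k

/-- Let `G` be a connected weighted multigraph with polarization `q` of genus `g ≥ 1`
(with the canonical divisor `K(p_i) = 2 q(p_i) + v(p_i) - 2` nonnegative at every vertex).
Then there is a homogeneous polynomial `P` in `m` variables of degree
`2 b_1 + 1 = 2(m - n + 1) + 1` with rational coefficients such that for all positive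
edge lengths, `ε(G) · η_G(ℓ)² = P(ℓ)`. -/
theorem stmt_7 {n m : ℕ} (G : WMG (Fin n) (Fin m)) (hG : G.Connected)
    (q : Fin n → ℕ) (hK : ∀ a, 2 ≤ 2 * q a + G.valence a) (hg : 1 ≤ G.genus q) :
    ∃ P : MvPolynomial (Fin m) ℚ, P.IsHomogeneous (2 * m + 3 - 2 * n) ∧
      ∀ ℓ : Fin m → ℝ, (∀ k, 0 < ℓ k) →
        G.epsilon q ℓ * (G.eta ℓ) ^ 2 = MvPolynomial.aeval ℓ P := by
  classical
  rcases Nat.eq_zero_or_pos n with hn0 | hn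
  · refine ⟨0, MvPolynomial.isHomogeneous_zero _ _ _, fun ℓ hℓ => ?_⟩
    have h0 : G.eta ℓ = 0 := by
      rw [WMG.eta]
      refine Finset.sum_eq_zero fun T _ => ?_
      rw [if_neg]
      intro hST
      have h1 := hST.1
      rw [Fintype.card_fin, hn0] at h1
      omega
    rw [h0]
    simp
  have hm : n ≤ m + 1 := G.n_le_m_add_one hG hn
  set b₀ : Fin n := ⟨0, hn⟩ with hb₀
  set ηP : MvPolynomial (Fin m) ℚ := G.FP {b₀}ᶜ with hηP
  set NP : Fin n → Fin n → MvPolynomial (Fin m) ℚ :=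
    fun a b => if a = b then 0 else G.FP ({a, b}ᶜ) with hNP
  set FQ : Fin m → MvPolynomial (Fin m) ℚ :=
    fun k => if (G.ends k).1 = (G.ends k).2 then ηP else ηP - G.QkP k with hFQ
  set gQ : ℚ := ((G.genus q : ℤ) : ℚ) with hgQ
  set Kq : Fin n → ℚ := fun a => 2 * (q a : ℚ) + (G.valence a : ℚ) - 2 with hKq
  set P : MvPolynomial (Fin m) ℚ :=
    MvPolynomial.C (1/gQ) *
      (∑ a, ∑ b, MvPolynomial.C ((q a : ℚ) * Kq b) * (NP a b * ηP))
    + MvPolynomial.C ((gQ - 1)/(3*gQ)) * (∑ k, MvPolynomial.X k * FQ k ^ 2)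
    + MvPolynomial.C (1/(2*gQ)) *
      (∑ a, MvPolynomial.C (Kq a) * ∑ k, FQ k * (NP a (G.ends k).1 + NP a (G.ends k).2))
    with hP
  have hηhom : ηP.IsHomogeneous (m + 1 - n) := by
    have h1 := G.FP_homog {b₀}ᶜ
    have hc : ({b₀}ᶜ : Finset (Fin n)).card = n - 1 := by
      rw [Finset.card_compl, Finset.card_singleton, Fintype.card_fin]
    rw [hc] at h1
    rw [show m + 1 - n = m - (n-1) by omega]
    exact h1
  have hNPhom : ∀ a b, (NP a b).IsHomogeneous (m + 2 - n) := by
    intro a b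
    rw [hNP]
    by_cases hab : a = b
    · simp only [if_pos hab]
      exact MvPolynomial.isHomogeneous_zero _ _ _
    · simp only [if_neg hab]
      have h2n : 2 ≤ n := by
        by_contra hlt
        push_neg at hlt
        exact hab (Fin.ext (by omega))
      have hc : ({a, b}ᶜ : Finset (Fin n)).card = n - 2 := by
        rw [Finset.card_compl, Finset.card_insert_of_notMem (by simp [hab]),
          Finset.card_singleton, Fintype.card_fin]
      have h1 := G.FP_homog {a, b}ᶜ
      rw [hc] at h1
      rw [show m + 2 - n = m - (n-2) by omega]
      exact h1
  have hFQhom : ∀ k, (FQ k).IsHomogeneous (m + 1 - n) := by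
    intro k
    rw [hFQ]
    by_cases hk : (G.ends k).1 = (G.ends k).2
    · simp only [if_pos hk]
      exact hηhom
    · simp only [if_neg hk]
      have h2n : 2 ≤ n := by
        by_contra hlt
        push_neg at hlt
        exact hk (Fin.ext (by omega))
      have hc : ({(G.ends k).1, (G.ends k).2}ᶜ : Finset (Fin n)).card = n - 2 := by
        rw [Finset.card_compl, Finset.card_insert_of_notMem (by simp [hk]),
          Finset.card_singleton, Fintype.card_fin]
      have hQ := G.QkP_homog k (d := m + 1 - n) (by rw [hc]; omega)
      exact hηhom.sub hQ
  have hPhom : P.IsHomogeneous (2 * m + 3 - 2 * n) := by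
    rw [hP]
    refine MvPolynomial.IsHomogeneous.add (MvPolynomial.IsHomogeneous.add ?_ ?_) ?_
    · have hsum : (∑ a, ∑ b, MvPolynomial.C ((q a : ℚ) * Kq b)
          * (NP a b * ηP)).IsHomogeneous (2*m+3-2*n) := by
        refine MvPolynomial.IsHomogeneous.sum _ _ _ fun a _ => ?_
        refine MvPolynomial.IsHomogeneous.sum _ _ _ fun b _ => ?_
        have h1 := (hNPhom a b).mul hηhom
        rw [show (m + 2 - n) + (m + 1 - n) = 2*m+3-2*n by omega] at h1
        have hC := (MvPolynomial.isHomogeneous_C (Fin m) ((q a : ℚ) * Kq b)).mul h1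
        rw [zero_add] at hC
        exact hC
      have hC := (MvPolynomial.isHomogeneous_C (Fin m) (1/gQ)).mul hsum
      rw [zero_add] at hC
      exact hC
    · have hsum : (∑ k, MvPolynomial.X k * FQ k ^ 2).IsHomogeneous (2*m+3-2*n) := by
        refine MvPolynomial.IsHomogeneous.sum _ _ _ fun k _ => ?_
        have h1 := (MvPolynomial.isHomogeneous_X ℚ k).mul ((hFQhom k).pow 2)
        rw [show 1 + (m + 1 - n) * 2 = 2*m+3-2*n by omega] at h1
        exact h1
      have hC := (MvPolynomial.isHomogeneous_C (Fin m) ((gQ - 1)/(3*gQ))).mul hsum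
      rw [zero_add] at hC
      exact hC
    · have hsum : (∑ a, MvPolynomial.C (Kq a) * ∑ k, FQ k * (NP a (G.ends k).1
          + NP a (G.ends k).2)).IsHomogeneous (2*m+3-2*n) := by
        refine MvPolynomial.IsHomogeneous.sum _ _ _ fun a _ => ?_
        have hinner : (∑ k, FQ k * (NP a (G.ends k).1 + NP a (G.ends k).2)).IsHomogeneous
            (2*m+3-2*n) := by
          refine MvPolynomial.IsHomogeneous.sum _ _ _ fun k _ => ?_
          have h1 := (hFQhom k).mul ((hNPhom a (G.ends k).1).add (hNPhom a (G.ends k).2))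
          rw [show (m + 1 - n) + (m + 2 - n) = 2*m+3-2*n by omega] at h1
          exact h1
        have hC := (MvPolynomial.isHomogeneous_C (Fin m) (Kq a)).mul hinner
        rw [zero_add] at hC
        exact hC
      have hC := (MvPolynomial.isHomogeneous_C (Fin m) (1/(2*gQ))).mul hsum
      rw [zero_add] at hC
      exact hC
  refine ⟨P, hPhom, fun ℓ hℓ => ?_⟩
  have E2 : (MvPolynomial.aeval ℓ) ηP = G.eta ℓ := (G.eta_eq_aeval_FP b₀ ℓ).symm
  have E1 : ∀ a b : Fin n, (MvPolynomial.aeval ℓ) (NP a b) = G.res ℓ a b * G.eta ℓ := by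
    intro a b
    rw [hNP]
    by_cases hab : a = b
    · simp only [if_pos hab]
      rw [map_zero, hab, G.res_self hG ℓ hℓ b, zero_mul]
    · simp only [if_neg hab]
      exact (G.res_eta hG ℓ hℓ hab).symm
  have E3 : ∀ k, (MvPolynomial.aeval ℓ) (FQ k) = G.Fres ℓ k * G.eta ℓ := by
    intro k
    rw [hFQ]
    by_cases hk : (G.ends k).1 = (G.ends k).2
    · simp only [if_pos hk]
      rw [E2, WMG.Fres, hk, G.res_self hG ℓ hℓ _, zero_div, sub_zero, one_mul]
    · simp only [if_neg hk]
      rw [map_sub, E2]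
      have hXQ := congrArg (MvPolynomial.aeval ℓ) (G.FP_eq_X_mul_QkP k)
      rw [_root_.map_mul, MvPolynomial.aeval_X] at hXQ
      have hres := G.res_eta hG ℓ hℓ hk
      have hlk : ℓ k ≠ 0 := (hℓ k).ne'
      have key : G.res ℓ (G.ends k).1 (G.ends k).2 * G.eta ℓ
          = ℓ k * (MvPolynomial.aeval ℓ) (G.QkP k) := by rw [hres, hXQ]
      rw [WMG.Fres]
      have expand : (1 - G.res ℓ (G.ends k).1 (G.ends k).2 / ℓ k) * G.eta ℓ
          = G.eta ℓ - (G.res ℓ (G.ends k).1 (G.ends k).2 * G.eta ℓ) / ℓ k := by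
        field_simp
      rw [expand, key]
      field_simp
  have hcast : ∀ r : ℚ, (algebraMap ℚ ℝ) r = (r : ℝ) := fun r => eq_ratCast (algebraMap ℚ ℝ) r
  have hKcast : ∀ a, ((Kq a : ℚ) : ℝ) = G.Kdiv q a := by
    intro a
    rw [hKq, WMG.Kdiv]
    push_cast
    ring
  have hgcast : ((gQ : ℚ) : ℝ) = ((G.genus q : ℤ) : ℝ) := by
    rw [hgQ]
    push_cast
    ring
  have t1 : ∀ a ∈ (Finset.univ : Finset (Fin n)),
      (MvPolynomial.aeval ℓ) (∑ b, MvPolynomial.C ((q a : ℚ) * Kq b) * (NP a b * ηP))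
      = ∑ b, (q a : ℝ) * G.Kdiv q b * ((G.res ℓ a b * G.eta ℓ) * G.eta ℓ) := by
    intro a _
    rw [map_sum]
    refine Finset.sum_congr rfl fun b _ => ?_
    rw [_root_.map_mul, MvPolynomial.aeval_C,
      show (MvPolynomial.aeval ℓ) (NP a b * ηP)
        = (MvPolynomial.aeval ℓ) (NP a b) * (MvPolynomial.aeval ℓ) ηP from _root_.map_mul _ _ _,
      E1 a b, E2]
    simp only [hcast]
    push_cast [hKcast]
    ring
  have t2 : ∀ k ∈ (Finset.univ : Finset (Fin m)),
      (MvPolynomial.aeval ℓ) (MvPolynomial.X k * FQ k ^ 2)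
      = ℓ k * (G.Fres ℓ k * G.eta ℓ) ^ 2 := by
    intro k _
    rw [_root_.map_mul, map_pow, MvPolynomial.aeval_X, E3 k]
  have t3 : ∀ a ∈ (Finset.univ : Finset (Fin n)),
      (MvPolynomial.aeval ℓ) (MvPolynomial.C (Kq a)
        * ∑ k, FQ k * (NP a (G.ends k).1 + NP a (G.ends k).2))
      = G.Kdiv q a * ∑ k, (G.Fres ℓ k * G.eta ℓ)
        * (G.res ℓ a (G.ends k).1 * G.eta ℓ + G.res ℓ a (G.ends k).2 * G.eta ℓ) := by
    intro a _
    rw [_root_.map_mul, MvPolynomial.aeval_C, map_sum]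
    simp only [hcast]
    rw [hKcast]
    congr 1
    refine Finset.sum_congr rfl fun k _ => ?_
    rw [_root_.map_mul, map_add, E3 k, E1, E1]
  have hPeval : (MvPolynomial.aeval ℓ) P
      = (((1:ℚ)/gQ : ℚ) : ℝ) * (∑ a, ∑ b, (q a : ℝ) * G.Kdiv q b
          * ((G.res ℓ a b * G.eta ℓ) * G.eta ℓ))
      + (((gQ - 1)/(3*gQ) : ℚ) : ℝ)
          * (∑ k, ℓ k * (G.Fres ℓ k * G.eta ℓ) ^ 2)
      + (((1:ℚ)/(2*gQ) : ℚ) : ℝ) * (∑ a, G.Kdiv q a * ∑ k, (G.Fres ℓ k * G.eta ℓ)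
          * (G.res ℓ a (G.ends k).1 * G.eta ℓ + G.res ℓ a (G.ends k).2 * G.eta ℓ)) := by
    rw [hP]
    rw [map_add, map_add, _root_.map_mul, _root_.map_mul, _root_.map_mul,
      MvPolynomial.aeval_C, MvPolynomial.aeval_C, MvPolynomial.aeval_C,
      map_sum, map_sum, map_sum]
    simp only [hcast]
    rw [Finset.sum_congr rfl t1, Finset.sum_congr rfl t2, Finset.sum_congr rfl t3]
  have hc1 : (((1:ℚ)/gQ : ℚ) : ℝ) = 1/((G.genus q : ℤ) : ℝ) := by
    rw [Rat.cast_div, Rat.cast_one, hgcast]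
  have hc2 : (((gQ - 1)/(3*gQ) : ℚ) : ℝ) = (((G.genus q : ℤ) : ℝ) - 1)/(3*((G.genus q : ℤ) : ℝ)) := by
    rw [Rat.cast_div, Rat.cast_sub, Rat.cast_one, Rat.cast_mul, hgcast]
    norm_num
  have hc3 : (((1:ℚ)/(2*gQ) : ℚ) : ℝ) = 1/(2*((G.genus q : ℤ) : ℝ)) := by
    rw [Rat.cast_div, Rat.cast_one, Rat.cast_mul, hgcast]
    norm_num
  rw [hPeval, hc1, hc2, hc3, WMG.epsilon]
  have hA : (∑ a, ∑ b, (q a : ℝ) * G.Kdiv q b * G.res ℓ a b) * G.eta ℓ ^ 2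
      = ∑ a, ∑ b, (q a : ℝ) * G.Kdiv q b * ((G.res ℓ a b * G.eta ℓ) * G.eta ℓ) := by
    rw [Finset.sum_mul]
    refine Finset.sum_congr rfl fun a _ => ?_
    rw [Finset.sum_mul]
    refine Finset.sum_congr rfl fun b _ => ?_
    ring
  have hB : (∑ k, (G.Fres ℓ k) ^ 2 * ℓ k) * G.eta ℓ ^ 2
      = ∑ k, ℓ k * (G.Fres ℓ k * G.eta ℓ) ^ 2 := by
    rw [Finset.sum_mul]
    refine Finset.sum_congr rfl fun k _ => ?_
    ring
  have hC : (∑ a, G.Kdiv q a * ∑ k, G.Fres ℓ k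
        * (G.res ℓ a (G.ends k).1 + G.res ℓ a (G.ends k).2)) * G.eta ℓ ^ 2
      = ∑ a, G.Kdiv q a * ∑ k, (G.Fres ℓ k * G.eta ℓ)
        * (G.res ℓ a (G.ends k).1 * G.eta ℓ + G.res ℓ a (G.ends k).2 * G.eta ℓ) := by
    rw [Finset.sum_mul]
    refine Finset.sum_congr rfl fun a _ => ?_
    rw [mul_assoc, Finset.sum_mul]
    congr 1
    refine Finset.sum_congr rfl fun k _ => ?_
    ring
  rw [← hA, ← hB, ← hC]
  ring
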